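/- Under the run invariant, if z = 0, c_j = c_i and l_j ≤ l_i, then c_k^{l_k} ⋯ c_{j-1}^{l_{j-1}} c_j^{l_j} ∈ P', and the longest border of this word has run-length encoding of length ℓ + 1 (so the invariant holds for j+1 with ℓ' = ℓ + 1). -/

import Mathlib

variable {α : Type*}
/-- The rotation `rot(w,i) = w[i..|w|-1] w[0..i-1]`. -/
def rot (w : List α) (i : ℕ) : List α := w.drop i ++ w.take i

/-- A Lyndon word: a nonempty word strictly smaller than all of its proper rotations. -/
def IsLyndon [LinearOrder α] (w : List α) : Prop :=
  w ≠ [] ∧ ∀ i, 0 < i → i < w.length → w < rot w i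

/-- `IsCFL w f` : `f` is the Chen–Fox–Lyndon factorization of `w`, i.e. a
nonincreasing sequence of Lyndon words whose concatenation is `w`. -/
def IsCFL [LinearOrder α] (w : List α) (f : List (List α)) : Prop :=
  f.flatten = w ∧ (∀ x ∈ f, IsLyndon x) ∧ f.Chain' (· ≥ ·)

/-- `u^k` : the `k`-fold concatenation of the word `u`. -/
def listPow (u : List α) (k : ℕ) : List α := (List.replicate k u).flatten

/-- `P`: the set of nonempty prefixes of Lyndon words. -/
def InP [LinearOrder α] (w : List α) : Prop :=
  w ≠ [] ∧ ∃ u : List α, IsLyndon (w ++ u)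

/-- `P' = P ∪ { c^k : k ≥ 2 }` where `c` is the maximum symbol of the alphabet. -/
def InP' [LinearOrder α] (w : List α) : Prop :=
  InP w ∨ ∃ (c : α) (k : ℕ), 2 ≤ k ∧ (∀ a : α, a ≤ c) ∧ w = List.replicate k c

/-- A border of `w`: a proper prefix of `w` that is also a suffix of `w`. -/
def IsBorder (b w : List α) : Prop := b <+: w ∧ b <:+ w ∧ b.length < w.length

/-- The length of the longest common prefix of two words. -/
def lcpLen [DecidableEq α] : List α → List α → ℕ
  | a :: u, b :: v => if a = b then lcpLen u v + 1 else 0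
  | _, _ => 0


/-- The number of runs in the run-length encoding of a word: the length of the
list obtained by collapsing consecutive equal symbols. -/
def numRuns [DecidableEq α] (w : List α) : ℕ := (w.destutter (· ≠ ·)).length

/-- An LR word: either a Lyndon word or a power `a^k` (`k ≥ 2`) of a single symbol. -/
def IsLR [LinearOrder α] (w : List α) : Prop :=
  IsLyndon w ∨ ∃ (a : α) (k : ℕ), 2 ≤ k ∧ w = List.replicate k a

/-- The word `c_k^{l_k} c_{k+1}^{l_{k+1}} ⋯ c_{j-1}^{l_{j-1}}` determined by the
runs `(c_t, l_t)` for `k ≤ t < j`. -/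
def runWord (c : ℕ → α) (l : ℕ → ℕ) (k j : ℕ) : List α :=
  ((List.range (j - k)).map (fun t => List.replicate (l (k + t)) (c (k + t)))).flatten


section Helpers
open List
variable [LinearOrder α]
set_option linter.unusedSectionVars false
set_option maxHeartbeats 1000000

/- lex helpers -/
theorem lx1 : ∀ (x y : List α) (m : ℕ) (hmx : m < x.length) (hmy : m < y.length),
    (∀ t (htx : t < x.length) (hty : t < y.length), t < m → x[t] = y[t]) → x[m]'hmx < y[m]'hmy → x < y
  | a :: x, b :: y, 0, _, _, _, hlt => List.Lex.rel hlt
  | a :: x, b :: y, m+1, hmx, hmy, heq, hlt => by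
      have h0 : a = b := heq 0 (Nat.succ_pos _) (Nat.succ_pos _) (Nat.succ_pos _)
      subst h0
      exact List.Lex.cons (lx1 x y m (Nat.lt_of_succ_lt_succ hmx) (Nat.lt_of_succ_lt_succ hmy)
        (fun t htx hty ht => heq (t+1) (Nat.succ_lt_succ htx) (Nat.succ_lt_succ hty) (Nat.succ_lt_succ ht)) hlt)

theorem lx5 : ∀ (x y : List α), x < y → y.length ≤ x.length →
    ∃ m, ∃ (hmx : m < x.length) (hmy : m < y.length),
      (∀ t (htx : t < x.length) (hty : t < y.length), t < m → x[t] = y[t]) ∧ x[m]'hmx < y[m]'hmy := by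
  intro x y h hle
  induction h with
  | nil => simp at hle
  | @rel a l₁ b l₂ hab => exact ⟨0, Nat.succ_pos _, Nat.succ_pos _, fun t _ _ ht => absurd ht (Nat.not_lt_zero t), hab⟩
  | @cons a l₁ l₂ h ih =>
      obtain ⟨m, hmx, hmy, heq, hlt⟩ := ih (Nat.le_of_succ_le_succ hle)
      refine ⟨m+1, Nat.succ_lt_succ hmx, Nat.succ_lt_succ hmy, ?_, hlt⟩
      intro t htx hty ht
      cases t with
      | zero => rfl
      | succ t => exact heq t (Nat.lt_of_succ_lt_succ htx) (Nat.lt_of_succ_lt_succ hty) (Nat.lt_of_succ_lt_succ ht)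

theorem lx3 : ∀ (x y : List α), x <+: y → x ≤ y := by
  intro x y h
  refine not_lt.1 (fun hlt => ?_)
  obtain ⟨m, hmx, hmy, heq, hcon⟩ := lx5 y x hlt h.length_le
  rw [h.getElem hmy] at hcon
  exact lt_irrefl _ hcon

theorem lx8 (x y : List α) (h : x <+: y) (hlen : x.length < y.length) : x < y := by
  rcases (lx3 x y h).lt_or_eq with h' | h'
  · exact h'
  · subst h'; exact absurd hlen (lt_irrefl _)

theorem lx4 : ∀ (n : ℕ) (x y : List α), x ≤ y → x.take n ≤ y.take n := by
  intro n x y h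
  refine not_lt.1 (fun hlt => absurd ?_ (not_lt.2 h))
  clear h
  induction n generalizing x y with
  | zero => simp only [take_zero] at hlt; exact absurd hlt (fun h => List.not_lex_nil h)
  | succ n ih =>
    cases x with
    | nil => simp only [take_nil] at hlt; exact absurd hlt (fun h => List.not_lex_nil h)
    | cons a xs =>
      cases y with
      | nil => exact List.Lex.nil
      | cons b ys =>
        simp only [take_succ_cons] at hlt
        cases hlt with
        | rel hr => exact List.Lex.rel hr
        | cons h' => exact List.Lex.cons (ih _ _ h')


def numRuns' [DecidableEq α] (w : List α) : ℕ := (w.destutter (· ≠ ·)).length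

def runWord' (c : ℕ → α) (l : ℕ → ℕ) (k j : ℕ) : List α :=
  ((List.range (j - k)).map (fun t => List.replicate (l (k + t)) (c (k + t)))).flatten

theorem runWord_self (c : ℕ → α) (l : ℕ → ℕ) (k : ℕ) : runWord' c l k k = [] := by
  simp [runWord']

theorem runWord_succ (c : ℕ → α) (l : ℕ → ℕ) {k j : ℕ} (h : k ≤ j) :
    runWord' c l k (j+1) = runWord' c l k j ++ List.replicate (l j) (c j) := by
  unfold runWord'
  rw [show j + 1 - k = (j - k) + 1 by omega, List.range_succ, List.map_append, List.flatten_append]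
  simp [show k + (j - k) = j by omega]

theorem runWord_cons (c : ℕ → α) (l : ℕ → ℕ) {k j : ℕ} (h : k < j) :
    runWord' c l k j = List.replicate (l k) (c k) ++ runWord' c l (k+1) j := by
  unfold runWord'
  rw [show j - k = (j - (k+1)) + 1 by omega, List.range_succ_eq_map, List.map_cons,
    List.flatten_cons]
  simp only [Nat.add_zero, List.map_map]
  refine congrArg (fun z => List.replicate (l k) (c k) ++ List.flatten z) (List.map_congr_left ?_)
  intro t _
  simp only [Function.comp_apply]
  congr 2 <;> omega

theorem runWord_append (c : ℕ → α) (l : ℕ → ℕ) {k m j : ℕ} (h1 : k ≤ m) (h2 : m ≤ j) :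
    runWord' c l k m ++ runWord' c l m j = runWord' c l k j := by
  induction j, h2 using Nat.le_induction with
  | base => rw [runWord_self]; simp
  | succ j hmj ih =>
      rw [runWord_succ c l hmj, runWord_succ c l (le_trans h1 hmj), ← List.append_assoc, ih]

theorem length_runWord_succ (c : ℕ → α) (l : ℕ → ℕ) {k j : ℕ} (h : k ≤ j) :
    (runWord' c l k (j+1)).length = (runWord' c l k j).length + l j := by
  rw [runWord_succ c l h]; simp

/- numRuns' lemmas -/
theorem destutter'_replicate_append (a : α) : ∀ (m : ℕ) (z : List α),
    List.destutter' (· ≠ ·) a (List.replicate m a ++ z) = List.destutter' (· ≠ ·) a z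
  | 0, z => rfl
  | m+1, z => by
      rw [List.replicate_succ, List.cons_append, List.destutter'_cons_neg _ (by simp)]
      exact destutter'_replicate_append a m z

theorem nr_rep_append (a : α) {m : ℕ} (hm : 0 < m) (z : List α) :
    numRuns' (List.replicate m a ++ z) = numRuns' (a :: z) := by
  obtain ⟨m, rfl⟩ : ∃ m', m = m' + 1 := ⟨m - 1, by omega⟩
  unfold numRuns'
  rw [List.replicate_succ, List.cons_append, List.destutter_cons', List.destutter_cons',
    destutter'_replicate_append]

theorem nr_cons_cons_ne {a b : α} (h : a ≠ b) (z : List α) :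
    numRuns' (a :: b :: z) = numRuns' (b :: z) + 1 := by
  unfold numRuns'
  rw [List.destutter_cons', List.destutter_cons', List.destutter'_cons_pos _ h]
  simp [Nat.add_comm]

theorem nr_singleton (a : α) : numRuns' [a] = 1 := rfl

theorem nr_nil_iff (x : List α) : numRuns' x = 0 ↔ x = [] := by
  cases x with
  | nil => simp [numRuns']
  | cons a z =>
      simp only [numRuns', List.destutter_cons']
      constructor
      · intro h; exact absurd (List.length_eq_zero_iff.1 h) (List.destutter'_ne_nil _ _)
      · intro h; simp at h

theorem nr_replicate (a : α) {m : ℕ} (hm : 0 < m) : numRuns' (List.replicate m a) = 1 := by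
  have := nr_rep_append a hm ([] : List α)
  simpa [nr_singleton] using this

theorem nr_cons_ne_rep {b a : α} (h : b ≠ a) {n : ℕ} (hn : 0 < n) (z : List α) :
    numRuns' (b :: (List.replicate n a ++ z)) = numRuns' (List.replicate n a ++ z) + 1 := by
  obtain ⟨n, rfl⟩ : ∃ n', n = n' + 1 := ⟨n - 1, by omega⟩
  rw [List.replicate_succ, List.cons_append, nr_cons_cons_ne h]

theorem nr_runWord_rep (c : ℕ → α) (l : ℕ → ℕ) :
    ∀ (d k : ℕ) (a : α) (m : ℕ), (∀ t, k ≤ t → t < k + d → 1 ≤ l t) →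
    (∀ t, k ≤ t → t + 1 < k + d → c t ≠ c (t+1)) → (d = 0 ∨ a ≠ c (k + d - 1)) → 0 < m →
    numRuns' (runWord' c l k (k+d) ++ List.replicate m a) = d + 1 := by
  intro d
  induction d with
  | zero =>
      intro k a m _ _ _ hm
      rw [Nat.add_zero, runWord_self]
      simp only [List.nil_append]
      rw [nr_replicate a hm]
  | succ d ih =>
      intro k a m hl hc ha hm
      have ha' : a ≠ c (k + d) := by
        rcases ha with h | h
        · omega
        · simpa using h
      rw [runWord_cons c l (by omega : k < k + (d+1)), List.append_assoc,
        nr_rep_append _ (hl k le_rfl (by omega))]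
      cases d with
      | zero =>
          rw [runWord_self]
          simp only [List.nil_append]
          have h1 := nr_cons_ne_rep (fun h => ha' h.symm) hm ([] : List α)
          simp only [List.append_nil, Nat.add_zero] at h1
          rw [h1, nr_replicate a hm]
      | succ d' =>
          have hk1 : k + (d' + 1 + 1) = (k + 1) + (d' + 1) := by omega
          rw [hk1, runWord_cons c l (by omega : k + 1 < k + 1 + (d' + 1)), List.append_assoc,
            nr_cons_ne_rep (hc k le_rfl (by omega)) (hl (k+1) (by omega) (by omega)),
            ← List.append_assoc, ← runWord_cons c l (by omega : k + 1 < k + 1 + (d' + 1))]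
          rw [ih (k+1) a m (fun t h1 h2 => hl t (by omega) (by omega))
            (fun t h1 h2 => hc t (by omega) (by omega)) (by right; rw [show k+1+(d'+1)-1 = k+(d'+1) by omega]; exact ha') hm]

theorem nr_runWord (c : ℕ → α) (l : ℕ → ℕ) (d k : ℕ) (hl : ∀ t, k ≤ t → t < k + d → 1 ≤ l t)
    (hc : ∀ t, k ≤ t → t + 1 < k + d → c t ≠ c (t+1)) :
    numRuns' (runWord' c l k (k+d)) = d := by
  cases d with
  | zero => rw [Nat.add_zero, runWord_self]; rfl
  | succ d' =>
      have : k + (d' + 1) = (k + d') + 1 := by omega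
      rw [this, runWord_succ c l (by omega : k ≤ k + d'),
        nr_runWord_rep c l d' k (c (k+d')) (l (k+d')) (fun t h1 h2 => hl t h1 (by omega))
          (fun t h1 h2 => hc t h1 (by omega)) ?_ (hl (k+d') (by omega) (by omega))]
      rcases Nat.eq_zero_or_pos d' with h | h
      · left; exact h
      · right; intro hcon
        exact hc (k+d'-1) (by omega) (by omega) (by rw [show k+d'-1+1 = k+d' by omega]; rw [show k + d' - 1 = k + d' - 1 by rfl] at hcon; exact hcon.symm)

theorem getLast?_runWord (c : ℕ → α) (l : ℕ → ℕ) {k j : ℕ} (h : k < j) (hl : 1 ≤ l (j-1)) :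
    (runWord' c l k j).getLast? = some (c (j-1)) := by
  have : j = (j-1) + 1 := by omega
  rw [this, runWord_succ c l (by omega : k ≤ j - 1), List.getLast?_append,
    List.getLast?_replicate]
  rw [if_neg (by omega)]
  rfl

theorem trailing_unique' : ∀ (m₁ m₂ : ℕ) (y₁ y₂ : List α) (a : α),
    (y₁.getLast? ≠ some a) → (y₂.getLast? ≠ some a) →
    y₁ ++ List.replicate m₁ a = y₂ ++ List.replicate m₂ a → y₁ = y₂ ∧ m₁ = m₂ := by
  intro m₁
  induction m₁ with
  | zero =>
      intro m₂ y₁ y₂ a h1 h2 heq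
      cases m₂ with
      | zero => simpa using heq
      | succ m₂ =>
          exfalso
          apply h1
          simp only [List.replicate_zero, List.append_nil] at heq
          rw [heq, List.getLast?_append, List.getLast?_replicate, if_neg (by omega)]
          rfl
  | succ m₁ ih =>
      intro m₂ y₁ y₂ a h1 h2 heq
      cases m₂ with
      | zero =>
          exfalso
          apply h2
          simp only [List.replicate_zero, List.append_nil] at heq
          rw [← heq, List.getLast?_append, List.getLast?_replicate, if_neg (by omega)]
          rfl
      | succ m₂ =>
          rw [List.replicate_succ' (n := m₁) (a := a), List.replicate_succ' (n := m₂) (a := a), ← List.append_assoc,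
            ← List.append_assoc] at heq
          have := List.append_cancel_right heq
          have h' := ih m₂ y₁ y₂ a h1 h2 this
          exact ⟨h'.1, by omega⟩

theorem trailing_unique (y₁ y₂ : List α) (a₁ a₂ : α) (m₁ m₂ : ℕ) (hm₁ : 0 < m₁) (hm₂ : 0 < m₂)
    (h1 : y₁.getLast? ≠ some a₁) (h2 : y₂.getLast? ≠ some a₂)
    (heq : y₁ ++ List.replicate m₁ a₁ = y₂ ++ List.replicate m₂ a₂) :
    y₁ = y₂ ∧ a₁ = a₂ ∧ m₁ = m₂ := by
  have ha : a₁ = a₂ := by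
    have e1 : (y₁ ++ List.replicate m₁ a₁).getLast? = some a₁ := by
      rw [List.getLast?_append, List.getLast?_replicate, if_neg (by omega)]; rfl
    have e2 : (y₂ ++ List.replicate m₂ a₂).getLast? = some a₂ := by
      rw [List.getLast?_append, List.getLast?_replicate, if_neg (by omega)]; rfl
    rw [heq, e2] at e1
    exact (Option.some_inj.1 e1).symm
  subst ha
  have := trailing_unique' m₁ m₂ y₁ y₂ a₁ h1 h2 heq
  exact ⟨this.1, rfl, this.2⟩

theorem prefix_runWord_struct (c : ℕ → α) (l : ℕ → ℕ) :
    ∀ (d k : ℕ) (x : List α), (∀ t, k ≤ t → t < k + d → 1 ≤ l t) →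
    x <+: runWord' c l k (k + d) →
    ∃ e m, e ≤ d ∧ x = runWord' c l k (k + e) ++ List.replicate m (c (k + e)) ∧
      (m = 0 ∨ (e < d ∧ 0 < m ∧ m < l (k + e))) := by
  intro d
  induction d with
  | zero =>
      intro k x _ hx
      rw [Nat.add_zero, runWord_self] at hx
      refine ⟨0, 0, le_rfl, ?_, Or.inl rfl⟩
      rw [List.prefix_nil.1 hx, Nat.add_zero, runWord_self]
      rfl
  | succ d ih =>
      intro k x hl hx
      rw [runWord_cons c l (by omega : k < k + (d+1))] at hx
      have hxeq := List.prefix_iff_eq_take.1 hx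
      rw [List.take_append] at hxeq
      by_cases hlen : x.length < l k
      · refine ⟨0, x.length, by omega, ?_, ?_⟩
        · rw [Nat.add_zero, runWord_self, List.nil_append, hxeq,
            List.take_replicate, Nat.sub_eq_zero_of_le (by simp; omega), List.take_zero,
            List.append_nil, show x.length ⊓ l k = x.length from min_eq_left (by omega)]
          rw [List.length_replicate]
        · rcases Nat.eq_zero_or_pos x.length with h | h
          · exact Or.inl h
          · exact Or.inr ⟨by omega, h, by rw [Nat.add_zero]; omega⟩
      · push_neg at hlen
        set x' := List.take (x.length - l k) (runWord' c l (k+1) (k + (d+1))) with hx'def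
        have hxx : x = List.replicate (l k) (c k) ++ x' := by
          rw [hxeq, List.take_replicate, List.length_replicate,
            show x.length ⊓ l k = l k from min_eq_right (by omega)]
        have hpre : x' <+: runWord' c l (k+1) ((k+1) + d) := by
          rw [show (k+1) + d = k + (d+1) by omega]
          exact List.take_prefix _ _
        obtain ⟨e', m', he', hxe, hcond⟩ := ih (k+1) x'
          (fun t h1 h2 => hl t (by omega) (by omega)) hpre
        refine ⟨e' + 1, m', by omega, ?_, ?_⟩
        · rw [hxx, hxe, runWord_cons c l (by omega : k < k + (e'+1)),
            show k + 1 + e' = k + (e' + 1) by omega, List.append_assoc]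
        · rcases hcond with h | h
          · exact Or.inl h
          · exact Or.inr ⟨by omega, h.2.1, by rw [show k + (e'+1) = k+1+e' by omega]; exact h.2.2⟩

theorem suffix_replicate_of_le {x y : List α} {t : ℕ} {a : α}
    (h : x <:+ y ++ List.replicate t a) (hle : x.length ≤ t) : x = List.replicate x.length a := by
  have hx := List.suffix_iff_eq_drop.1 h
  rw [List.drop_append, List.length_append, List.length_replicate] at hx
  rw [hx, List.drop_eq_nil_of_le (by omega), List.nil_append, List.drop_replicate]
  have h1 : t - (y.length + t - x.length - y.length) = x.length := by omega
  rw [h1]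
  congr 1
  rw [hx, List.drop_eq_nil_of_le (by omega), List.nil_append, List.drop_replicate]
  simp

theorem suffix_split_of_gt {b y : List α} {t : ℕ} {a : α}
    (h : b <:+ y ++ List.replicate t a) (hgt : t < b.length) :
    ∃ b₀, b = b₀ ++ List.replicate t a ∧ b₀ ≠ [] ∧ b₀ <:+ y := by
  have hlen := h.length_le
  rw [List.length_append, List.length_replicate] at hlen
  have hx := List.suffix_iff_eq_drop.1 h
  rw [List.drop_append, List.length_append, List.length_replicate] at hx
  have h2 : y.length + t - b.length - y.length = 0 := by omega
  rw [h2, List.drop_zero] at hx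
  refine ⟨List.drop (y.length + t - b.length) y, hx, ?_, List.drop_suffix _ _⟩
  intro hcon
  have := congrArg List.length hcon
  simp only [List.length_drop, List.length_nil] at this
  omega

theorem getLast?_suffix {x y : List α} (h : x <:+ y) (hne : x ≠ []) :
    x.getLast? = y.getLast? := by
  obtain ⟨u, rfl⟩ := h
  rw [List.getLast?_append]
  cases hx : x.getLast? with
  | none => exact absurd (List.getLast?_eq_none_iff.1 hx) hne
  | some v => rfl

theorem replicate_prefix_replicate {a : α} {m t : ℕ} (h : m ≤ t) :
    List.replicate m a <+: List.replicate t a :=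
  ⟨List.replicate (t - m) a, by rw [← List.replicate_add]; congr 1; omega⟩

theorem replicate_suffix_replicate {a : α} {m t : ℕ} (h : m ≤ t) :
    List.replicate m a <:+ List.replicate t a :=
  ⟨List.replicate (t - m) a, by rw [← List.replicate_add]; congr 1; omega⟩

theorem prefix_of_prefix_append {x y z : List α} (h : x <+: y ++ z) (hle : x.length ≤ y.length) :
    x <+: y := by
  rw [List.prefix_iff_eq_take.1 h, List.take_append,
    Nat.sub_eq_zero_of_le hle, List.take_zero, List.append_nil]
  exact List.take_prefix _ _

def rot' (w : List α) (i : ℕ) : List α := w.drop i ++ w.take i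

def IsLyndon' (w : List α) : Prop :=
  w ≠ [] ∧ ∀ i, 0 < i → i < w.length → w < rot' w i

def listPow' (u : List α) (k : ℕ) : List α := (List.replicate k u).flatten

theorem lex_of_append_left : ∀ (s : List α) {t u : List α}, s ++ t < s ++ u → t < u := by
  intro s
  induction s with
  | nil => intro t u h; exact h
  | cons a s ih =>
      intro t u h
      cases h with
      | rel hr => exact absurd hr (lt_irrefl a)
      | cons h' => exact ih h'

theorem lx9 : ∀ (x y : List α), x < y → ¬ x <+: y →
    ∃ m, ∃ (hmx : m < x.length) (hmy : m < y.length),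
      (∀ t (htx : t < x.length) (hty : t < y.length), t < m → x[t] = y[t]) ∧ x[m]'hmx < y[m]'hmy := by
  intro x y h
  induction h with
  | nil => intro hp; exact absurd (List.nil_prefix) hp
  | @rel a l₁ b l₂ hab =>
      intro _
      exact ⟨0, Nat.succ_pos _, Nat.succ_pos _, fun t _ _ ht => absurd ht (Nat.not_lt_zero t), hab⟩
  | @cons a l₁ l₂ h ih =>
      intro hp
      have : ¬ l₁ <+: l₂ := fun hc => hp (List.cons_prefix_cons.2 ⟨rfl, hc⟩)
      obtain ⟨m, hmx, hmy, heq, hlt⟩ := ih this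
      refine ⟨m+1, Nat.succ_lt_succ hmx, Nat.succ_lt_succ hmy, ?_, hlt⟩
      intro t htx hty ht
      cases t with
      | zero => rfl
      | succ t => exact heq t (Nat.lt_of_succ_lt_succ htx) (Nat.lt_of_succ_lt_succ hty) (Nat.lt_of_succ_lt_succ ht)

theorem getElem_rot_left {w : List α} {i t : ℕ} (h : t < w.length - i)
    (hh : t < (rot' w i).length) : (rot' w i)[t] = w[i + t]'(by omega) := by
  show (w.drop i ++ w.take i)[t]'(by simpa [rot'] using hh) = _
  rw [List.getElem_append (h := by simpa [rot'] using hh),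
    dif_pos (by simp only [List.length_drop]; omega)]
  simp

theorem lyndon_unbordered {w : List α} (hw : IsLyndon' w) :
    ∀ r, 0 < r → r < w.length → w.drop r ≠ w.take (w.length - r) := by
  intro r h0 hr heq
  have hlt1 : w.take (w.length - r) ++ w.drop (w.length - r) <
      w.take (w.length - r) ++ w.take r := by
    rw [List.take_append_drop]
    have h1 := hw.2 r h0 hr
    rw [show rot' w r = w.drop r ++ w.take r from rfl, heq] at h1
    exact h1
  have h1' : w.drop (w.length - r) < w.take r := lex_of_append_left _ hlt1
  obtain ⟨m, hmx, hmy, heqm, hltm⟩ := lx5 _ _ h1'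
    (by simp only [List.length_take, List.length_drop]; omega)
  simp only [List.length_drop] at hmx
  simp only [List.length_take] at hmy
  simp only [List.getElem_drop, List.getElem_take] at hltm heqm
  have h2 := hw.2 (w.length - r) (by omega) (by omega)
  rw [show rot' w (w.length - r) = w.drop (w.length - r) ++ w.take (w.length - r) from rfl] at h2
  have hcon : w.drop (w.length - r) ++ w.take (w.length - r) < w := by
    refine lx1 _ _ m (by simp only [List.length_append, List.length_take, List.length_drop]; omega)
      (by omega) ?_ ?_
    · intro t ht1 ht2 htm
      rw [List.getElem_append (h := ht1), dif_pos (by simp only [List.length_drop]; omega)]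
      simp only [List.getElem_drop]
      exact heqm t (by simp only [List.length_drop]; omega)
        (by simp only [List.length_take]; omega) htm
    · rw [List.getElem_append (h := by simp only [List.length_append, List.length_take, List.length_drop]; omega),
        dif_pos (by simp only [List.length_drop]; omega)]
      simp only [List.getElem_drop]
      exact hltm
  exact lt_asymm h2 hcon

theorem lyndon_lt_suffix {w : List α} (hw : IsLyndon' w) {r : ℕ} (h0 : 0 < r)
    (hr : r < w.length) : w < w.drop r := by
  have hrot := hw.2 r h0 hr
  rw [show rot' w r = w.drop r ++ w.take r from rfl] at hrot
  obtain ⟨m, hmx, hmy, heqm, hltm⟩ := lx5 _ _ hrot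
    (by simp only [List.length_append, List.length_take, List.length_drop]; omega)
  by_cases hm : m < w.length - r
  · refine lx1 _ _ m (by omega) (by simp only [List.length_drop]; omega) ?_ ?_
    · intro t htx hty htm
      have h3 := heqm t (by omega)
        (by simp only [List.length_append, List.length_take, List.length_drop]; omega) htm
      rw [List.getElem_append (h := by simp only [List.length_append, List.length_take, List.length_drop]; omega),
        dif_pos (by simp only [List.length_drop]; omega)] at h3
      exact h3
    · have h3 := hltm
      rw [List.getElem_append (h := by simp only [List.length_append, List.length_take, List.length_drop]; omega),
        dif_pos (by simp only [List.length_drop]; omega)] at h3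
      exact h3
  · exfalso
    apply lyndon_unbordered hw r h0 hr
    apply List.ext_getElem (by simp only [List.length_take, List.length_drop]; omega)
    intro t h1t h2t
    simp only [List.length_drop] at h1t
    have h3 := heqm t (by omega)
      (by simp only [List.length_append, List.length_take, List.length_drop]; omega)
      (by omega)
    rw [List.getElem_append (h := by simp only [List.length_append, List.length_take, List.length_drop]; omega),
      dif_pos (by simp only [List.length_drop]; omega)] at h3
    simp only [List.getElem_drop, List.getElem_take] at h3 ⊢
    exact h3.symm

theorem lyndon_of_lt_suffix {w : List α} (hne : w ≠ [])
    (h : ∀ r, 0 < r → r < w.length → w < w.drop r) : IsLyndon' w := by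
  refine ⟨hne, fun i h0 hi => ?_⟩
  obtain ⟨m, hmx, hmy, heqm, hltm⟩ := lx5 _ _ (h i h0 hi)
    (by simp only [List.length_drop]; omega)
  simp only [List.length_drop] at hmy
  refine lx1 _ _ m hmx ?_ ?_ ?_
  · simp only [rot', List.length_append, List.length_take, List.length_drop]
    omega
  · intro t htx hty htm
    rw [getElem_rot_left (by omega)]
    have h3 := heqm t htx (by simp only [List.length_drop]; omega) htm
    simp only [List.getElem_drop] at h3
    exact h3
  · rw [getElem_rot_left (by omega)]
    have h3 := hltm
    simp only [List.getElem_drop] at h3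
    exact h3

theorem lyndon_append {u v : List α} (hu : IsLyndon' u) (hv : IsLyndon' v) (huv : u < v) :
    IsLyndon' (u ++ v) := by
  have hul : 0 < u.length := List.length_pos_iff.2 hu.1
  have hvl : 0 < v.length := List.length_pos_iff.2 hv.1
  have huv2 : u ++ v < v := by
    by_cases hp : u <+: v
    · obtain ⟨w', hw'⟩ := hp
      have hw'ne : w' ≠ [] := by
        intro hcon
        rw [hcon, List.append_nil] at hw'
        rw [hw'] at huv
        exact lt_irrefl _ huv
      have hdw : v.drop u.length = w' := by rw [← hw', List.drop_left' rfl]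
      have : v < w' := by
        have h4 := lyndon_lt_suffix hv (r := u.length) (by omega)
          (by rw [← hw', List.length_append]; have := List.length_pos_iff.2 hw'ne; omega)
        rwa [hdw] at h4
      calc u ++ v < u ++ w' := List.Lex.append_left _ this _
      _ = v := hw'.symm ▸ rfl
    · obtain ⟨m, hmx, hmy, heqm, hltm⟩ := lx9 _ _ huv hp
      refine lx1 _ _ m (by simp only [List.length_append]; omega) hmy ?_ ?_
      · intro t ht1 ht2 htm
        rw [List.getElem_append (h := ht1), dif_pos (by omega)]
        exact heqm t (by omega) ht2 htm
      · rw [List.getElem_append (h := by simp only [List.length_append]; omega), dif_pos (by omega)]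
        exact hltm
  refine lyndon_of_lt_suffix (by simp [hu.1]) ?_
  intro r h0 hr
  simp only [List.length_append] at hr
  rcases lt_trichotomy r u.length with hcase | hcase | hcase
  · -- drop = u.drop r ++ v
    have hdrop : (u ++ v).drop r = u.drop r ++ v := by
      rw [List.drop_append, Nat.sub_eq_zero_of_le (by omega), List.drop_zero]
    rw [hdrop]
    have hus := lyndon_lt_suffix hu h0 hcase
    obtain ⟨m, hmx, hmy, heqm, hltm⟩ := lx5 _ _ hus (by simp only [List.length_drop]; omega)
    simp only [List.length_drop] at hmy
    refine lx1 _ _ m (by simp only [List.length_append]; omega)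
      (by simp only [List.length_append, List.length_drop]; omega) ?_ ?_
    · intro t ht1 ht2 htm
      rw [List.getElem_append (h := ht1), dif_pos (by omega),
        List.getElem_append (h := ht2), dif_pos (by simp only [List.length_drop]; omega)]
      exact heqm t (by omega) (by simp only [List.length_drop]; omega) htm
    · rw [List.getElem_append (h := by simp only [List.length_append]; omega), dif_pos (by omega),
        List.getElem_append (h := by simp only [List.length_append, List.length_drop]; omega),
        dif_pos (by simp only [List.length_drop]; omega)]
      exact hltm
  · rw [hcase, List.drop_left' rfl]
    exact huv2
  · have hdrop : (u ++ v).drop r = v.drop (r - u.length) := by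
      rw [List.drop_append, List.drop_eq_nil_of_le (by omega), List.nil_append]
    rw [hdrop]
    exact lt_trans huv2 (lyndon_lt_suffix hv (by omega) (by omega))

theorem listPow_succ (q : List α) (t : ℕ) : listPow' q (t+1) = q ++ listPow' q t := by
  simp [listPow', List.replicate_succ]

theorem length_listPow (q : List α) (t : ℕ) : (listPow' q t).length = t * q.length := by
  induction t with
  | zero => simp [listPow']
  | succ t ih => rw [listPow_succ, List.length_append, ih]; ring

theorem getElem_listPow (q : List α) (hq : q ≠ []) :
    ∀ (M m : ℕ) (h : m < (listPow' q M).length),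
    (listPow' q M)[m] = q[m % q.length]'(Nat.mod_lt _ (List.length_pos_iff.2 hq)) := by
  intro M
  induction M with
  | zero => intro m h; simp [listPow'] at h
  | succ M ih =>
      intro m h
      rw [List.getElem_of_eq (listPow_succ q M) h]
      rw [listPow_succ] at h
      by_cases hm : m < q.length
      · rw [List.getElem_append (h := h), dif_pos hm]
        congr 1
        exact (Nat.mod_eq_of_lt hm).symm
      · rw [List.getElem_append (h := h), dif_neg hm]
        rw [ih (m - q.length) (by simp only [List.length_append] at h; omega)]
        congr 1
        conv_rhs => rw [show m = (m - q.length) + q.length by omega]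
        rw [Nat.add_mod_right]

theorem prefix_listPow (q w : List α) (hq : q ≠ [])
    (hpf : ∀ (m : ℕ) (h : m < w.length), w[m] = q[m % q.length]'(Nat.mod_lt _ (List.length_pos_iff.2 hq))) :
    w <+: listPow' q w.length := by
  have hlen : w.length ≤ (listPow' q w.length).length := by
    rw [length_listPow]
    have : 1 ≤ q.length := List.length_pos_iff.2 hq
    nlinarith
  rw [List.prefix_iff_eq_take]
  apply List.ext_getElem (by rw [List.length_take]; omega)
  intro t h1 h2
  rw [List.getElem_take, getElem_listPow q hq, hpf t h1]

theorem lyndon_pow_snoc {q : List α} (hq : IsLyndon' q) {dd : α}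
    (hd : q[0]'(List.length_pos_iff.2 hq.1) < dd) :
    ∀ t, IsLyndon' (listPow' q t ++ [dd]) := by
  intro t
  induction t with
  | zero =>
      refine ⟨by simp [listPow'], fun i h0 hi => ?_⟩
      simp [listPow'] at hi
      omega
  | succ t ih =>
      rw [listPow_succ, List.append_assoc]
      refine lyndon_append hq ih ?_
      cases t with
      | zero =>
          show q < [] ++ [dd]
          rw [List.nil_append]
          exact lx1 q [dd] 0 (List.length_pos_iff.2 hq.1) (by simp) (by intro t _ _ ht; omega) hd
      | succ t' =>
          apply lx8
          · refine ⟨listPow' q t' ++ [dd], ?_⟩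
            rw [listPow_succ, List.append_assoc]
          · simp only [List.length_append, length_listPow, List.length_cons, List.length_nil]
            have : 1 ≤ q.length := List.length_pos_iff.2 hq.1
            nlinarith

def CondC (w : List α) : Prop := ∀ r, 0 < r → r < w.length → w.take (w.length - r) ≤ w.drop r

def HasPeriod' (w : List α) (p : ℕ) : Prop :=
  ∀ m (h : m + p < w.length), w[m]'(by omega) = w[m+p]'h

theorem lyndon_singleton (a : α) : IsLyndon' [a] := by
  refine ⟨by simp, fun i h0 hi => ?_⟩
  simp at hi
  omega

theorem length_rot (w : List α) (i : ℕ) : (rot' w i).length = w.length := by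
  simp [rot']
  omega

theorem getElem_rot_mod {q : List α} {φ t : ℕ} (hφ : φ < q.length) (ht : t < q.length)
    (h2 : t < (rot' q φ).length) :
    (rot' q φ)[t] = q[(t + φ) % q.length]'(Nat.mod_lt _ (by omega)) := by
  show (q.drop φ ++ q.take φ)[t]'(by simpa [rot'] using h2) = _
  by_cases hc : t < q.length - φ
  · rw [List.getElem_append (h := by simpa [rot'] using h2),
      dif_pos (by simp only [List.length_drop]; omega)]
    simp only [List.getElem_drop]
    congr 1
    rw [Nat.mod_eq_of_lt (by omega)]
    omega
  · rw [List.getElem_append (h := by simpa [rot'] using h2),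
      dif_neg (by simp only [List.length_drop]; omega)]
    simp only [List.getElem_take, List.length_drop]
    congr 1
    have h3 : (t + φ) - q.length < q.length := by omega
    have h4 : t + φ = ((t + φ) - q.length) + q.length := by omega
    rw [h4, Nat.add_mod_right, Nat.mod_eq_of_lt (by omega)]
    omega

theorem gei {x : List α} {i j : ℕ} (h : i = j) (hi : i < x.length) :
    x[i]'hi = x[j]'(h ▸ hi) := by subst h; rfl

theorem periodic_struct : ∀ (n : ℕ) (w : List α), w.length = n → w ≠ [] → CondC w →
    ∃ q : List α, IsLyndon' q ∧ 0 < q.length ∧ q.length ≤ w.length ∧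
      (∀ (m : ℕ) (h : m < w.length) (h2 : m % q.length < q.length), w[m] = q[m % q.length]'h2) ∧
      (∀ p', 0 < p' → p' < q.length → ¬ HasPeriod' w p') := by
  intro n
  induction n with
  | zero => intro w hlen hne _; exact absurd (List.length_eq_zero_iff.1 hlen) hne
  | succ n ih =>
      intro w hlen hne hC
      rcases Nat.eq_zero_or_pos n with hn0 | hnpos
      · subst hn0
        obtain ⟨a, rfl⟩ := List.length_eq_one_iff.1 hlen
        refine ⟨[a], lyndon_singleton a, by simp, by simp, ?_, ?_⟩
        · intro m h h2
          simp only [List.length_cons, List.length_nil] at h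
          have hm0 : m = 0 := by omega
          subst hm0
          rfl
        · intro p' h1 h2
          simp only [List.length_cons, List.length_nil] at h2
          omega
      · have hvlen : (w.take n).length = n := by rw [List.length_take]; omega
        have hvne : w.take n ≠ [] := by
          intro hc
          rw [hc] at hvlen
          simp only [List.length_nil] at hvlen
          omega
        have hCv : CondC (w.take n) := by
          intro r h0 hr
          rw [hvlen]
          have h1 := hC r h0 (by omega)
          have h2 := lx4 (n - r) _ _ h1
          have e1 : (w.take (w.length - r)).take (n - r) = w.take (n - r) := by
            rw [List.take_take]
            congr 1
            omega
          have e2 : (w.drop r).take (n - r) = (w.take n).drop r := by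
            rw [List.drop_take]
          have e3 : (w.take n).take (n - r) = w.take (n - r) := by
            rw [List.take_take]
            congr 1
            omega
          rw [e1, e2] at h2
          rw [e3]
          exact h2
        obtain ⟨q, hqly, hqpos, hqle, hPF, hmin⟩ := ih (w.take n) hvlen hvne hCv
        rw [hvlen] at hqle
        have hqne : q ≠ [] := fun hc => by simp [hc] at hqpos
        have han : n < w.length := by omega
        have hvget : ∀ (m : ℕ) (hm : m < n), w[m]'(by omega) = q[m % q.length]'(Nat.mod_lt _ hqpos) := by
          intro m hm
          have h3 := hPF m (by rw [hvlen]; omega) (Nat.mod_lt _ hqpos)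
          rwa [List.getElem_take] at h3
        have hmodlt : n % q.length < q.length := Nat.mod_lt _ hqpos
        have hnoper_of_gt : q[n % q.length]'hmodlt < w[n]'han →
            ∀ r, 0 < r → r < n + 1 → ¬ HasPeriod' w r := by
          intro hgt r h0 hr hper
          have haeq : w[n]'han = q[(n - r) % q.length]'(Nat.mod_lt _ hqpos) := by
            have h1 := hper (n - r) (by omega)
            have h1' : w[n - r + r]'(by omega) = w[n]'han := gei (by omega) _
            rw [h1'] at h1
            rw [← h1, hvget (n - r) (by omega)]
          rcases lt_or_ge r q.length with hrp | hrp
          · apply hmin r h0 hrp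
            intro m hm
            rw [hvlen] at hm
            have h1 := hper m (by omega)
            simp only [List.getElem_take]
            exact h1
          · have hφlt : r % q.length < q.length := Nat.mod_lt _ hqpos
            rcases Nat.eq_zero_or_pos (r % q.length) with hφ0 | hφpos
            · obtain ⟨sdiv, hs⟩ := Nat.dvd_of_mod_eq_zero hφ0
              have hmod : (n - r) % q.length = n % q.length := by
                conv_rhs => rw [show n = (n - r) + q.length * sdiv by omega]
                rw [Nat.add_mul_mod_self_left]
              have h6 : q[(n - r) % q.length]'(Nat.mod_lt _ hqpos) =
                  q[n % q.length]'hmodlt := gei hmod _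
              rw [h6] at haeq
              rw [haeq] at hgt
              exact lt_irrefl _ hgt
            · have hrotlt := hqly.2 (r % q.length) hφpos hφlt
              obtain ⟨d₀, hd₀x, hd₀y, heqd, hltd⟩ := lx5 _ _ hrotlt (by rw [length_rot])
              have hltd' : q[d₀]'hd₀x < q[(d₀ + r % q.length) % q.length]'(Nat.mod_lt _ hqpos) := by
                rw [getElem_rot_mod hφlt hd₀x] at hltd
                exact hltd
              have heqd' : ∀ t, t < d₀ → (ht : t < q.length) →
                  q[t]'ht = q[(t + r % q.length) % q.length]'(Nat.mod_lt _ hqpos) := by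
                intro t htd ht
                have h4 := heqd t ht (by rw [length_rot]; exact ht) htd
                rw [getElem_rot_mod hφlt ht] at h4
                exact h4
              have hmodshift : ∀ m : ℕ, (m + r) % q.length = (m + r % q.length) % q.length := by
                intro m
                rw [Nat.add_mod m r, Nat.add_mod m (r % q.length),
                  Nat.mod_mod_of_dvd _ dvd_rfl]
              have hEstep : ∀ m, m + r < n →
                  q[m % q.length]'(Nat.mod_lt _ hqpos) =
                  q[(m + r % q.length) % q.length]'(Nat.mod_lt _ hqpos) := by
                intro m hm
                have h1 := hper m (by omega)
                rw [hvget m (by omega), hvget (m + r) (by omega)] at h1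
                rw [h1]
                congr 1
                exact hmodshift m
              have h6 : q[n % q.length]'hmodlt =
                  q[((n - r) % q.length + r % q.length) % q.length]'(Nat.mod_lt _ hqpos) := by
                apply gei
                conv_lhs => rw [show n = (n - r) + r by omega]
                rw [hmodshift (n - r), Nat.add_mod, Nat.mod_eq_of_lt hφlt]
              rw [h6, haeq] at hgt
              rcases lt_trichotomy ((n - r) % q.length) d₀ with hμ | hμ | hμ
              · have h7 := heqd' _ hμ (Nat.mod_lt _ hqpos)
                rw [h7] at hgt
                exact lt_irrefl _ hgt
              · have h8 : q[(n - r) % q.length]'(Nat.mod_lt _ hqpos) = q[d₀]'hd₀x := gei hμ _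
                have h9 : q[((n - r) % q.length + r % q.length) % q.length]'(Nat.mod_lt _ hqpos) =
                    q[(d₀ + r % q.length) % q.length]'(Nat.mod_lt _ hqpos) := gei (by rw [hμ]) _
                rw [h8, h9] at hgt
                exact lt_asymm hltd' hgt
              · have hd₀r : d₀ + r < n := by
                  have : (n - r) % q.length ≤ n - r := Nat.mod_le _ _
                  omega
                have h7 := hEstep d₀ hd₀r
                have h8 : q[d₀ % q.length]'(Nat.mod_lt _ hqpos) = q[d₀]'hd₀x :=
                  gei (Nat.mod_eq_of_lt hd₀x) _
                rw [h8] at h7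
                rw [h7] at hltd'
                exact lt_irrefl _ hltd'
        -- main trichotomy
        rcases lt_trichotomy (w[n]'han) (q[n % q.length]'hmodlt) with hlt | heqa | hgt
        · -- contradiction with CondC at r = q.length
          exfalso
          have hplt : q.length < w.length := by omega
          have hCp := hC q.length hqpos hplt
          have hdlt : w.drop q.length < w.take (w.length - q.length) := by
            refine lx1 _ _ (n - q.length) (by simp only [List.length_drop]; omega)
              (by simp only [List.length_take]; omega) ?_ ?_
            · intro t ht1 ht2 htm
              simp only [List.getElem_drop, List.getElem_take]
              have e1 : w[q.length + t]'(by simp only [List.length_drop] at ht1; omega) =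
                  q[(q.length + t) % q.length]'(Nat.mod_lt _ hqpos) :=
                hvget (q.length + t) (by omega)
              have e2 : w[t]'(by omega) = q[t % q.length]'(Nat.mod_lt _ hqpos) :=
                hvget t (by omega)
              rw [e1, e2]
              apply gei
              rw [show q.length + t = t + q.length by ring, Nat.add_mod_right]
            · simp only [List.getElem_drop, List.getElem_take]
              have e0 : q.length + (n - q.length) = n := by omega
              have e1 : w[q.length + (n - q.length)]'(by omega) = w[n]'han := gei e0 _
              rw [e1]
              have e2 : w[n - q.length]'(by omega) =
                  q[(n - q.length) % q.length]'(Nat.mod_lt _ hqpos) :=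
                hvget (n - q.length) (by omega)
              rw [e2]
              have e3 : q[(n - q.length) % q.length]'(Nat.mod_lt _ hqpos) =
                  q[n % q.length]'hmodlt := by
                apply gei
                conv_rhs => rw [show n = (n - q.length) + q.length by omega]
                rw [Nat.add_mod_right]
              rw [e3]
              exact hlt
          exact absurd hdlt (not_lt.2 hCp)
        · -- extend with the same q
          refine ⟨q, hqly, hqpos, by omega, ?_, ?_⟩
          · intro m hm h2
            rcases lt_or_ge m n with hmn | hmn
            · exact hvget m hmn
            · have hmeq : m = n := by omega
              subst hmeq
              exact heqa
          · intro p' h1 h2 hper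
            apply hmin p' h1 h2
            intro m hm
            rw [hvlen] at hm
            simp only [List.getElem_take]
            exact hper m (by omega)
        · -- w itself is Lyndon
          have hnoper := hnoper_of_gt hgt
          have hwlt : ∀ r, 0 < r → r < w.length → w < w.drop r := by
            intro r h0 hr
            have hCr := hC r h0 hr
            rcases hCr.lt_or_eq with hlt' | heq'
            · obtain ⟨m, hmx, hmy, heqm, hltm⟩ := lx5 _ _ hlt'
                (by simp only [List.length_take, List.length_drop]; omega)
              simp only [List.length_take] at hmx
              simp only [List.length_drop] at hmy
              refine lx1 _ _ m (by omega) (by simp only [List.length_drop]; omega) ?_ ?_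
              · intro t ht1 ht2 htm
                have h4 := heqm t (by simp only [List.length_take]; omega)
                  (by simp only [List.length_drop]; omega) htm
                simp only [List.getElem_take, List.getElem_drop] at h4 ⊢
                exact h4
              · simp only [List.getElem_take, List.getElem_drop] at hltm ⊢
                exact hltm
            · exfalso
              apply hnoper r h0 (by omega)
              intro m hm
              have h4 : (w.take (w.length - r))[m]'(by simp only [List.length_take]; omega) =
                  (w.drop r)[m]'(by simp only [List.length_drop]; omega) :=
                List.getElem_of_eq heq' _
              simp only [List.getElem_take, List.getElem_drop] at h4
              have h5 : w[r + m]'(by omega) = w[m + r]'(by omega) := gei (by omega) _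
              rw [h5] at h4
              exact h4
          have hwly := lyndon_of_lt_suffix hne hwlt
          refine ⟨w, hwly, by omega, le_rfl, ?_, ?_⟩
          · intro m hm h2
            apply gei
            exact (Nat.mod_eq_of_lt hm).symm
          · intro p' h1 h2 hper
            exact hnoper p' h1 (by omega) hper

def InP0 (w : List α) : Prop := w ≠ [] ∧ ∃ u : List α, IsLyndon' (w ++ u)

def InP'0 (w : List α) : Prop :=
  InP0 w ∨ ∃ (cc : α) (kk : ℕ), 2 ≤ kk ∧ (∀ a : α, a ≤ cc) ∧ w = List.replicate kk cc

theorem condC_of_lyndon_prefix {w u : List α} (hL : IsLyndon' (w ++ u)) : CondC w := by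
  intro r h0 hr
  refine not_lt.1 (fun hlt => ?_)
  obtain ⟨m, hmx, hmy, heqm, hltm⟩ := lx5 _ _ hlt
    (by simp only [List.length_take, List.length_drop]; omega)
  simp only [List.length_drop] at hmx
  simp only [List.length_take] at hmy
  simp only [List.getElem_drop, List.getElem_take] at hltm
  have hLlen : r < (w ++ u).length := by simp only [List.length_append]; omega
  have hrot := hL.2 r h0 hLlen
  have hcon : rot' (w ++ u) r < w ++ u := by
    refine lx1 _ _ m (by rw [length_rot]; simp only [List.length_append]; omega)
      (by simp only [List.length_append]; omega) ?_ ?_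
    · intro t ht1 ht2 htm
      rw [getElem_rot_left (by simp only [List.length_append]; omega)]
      rw [List.getElem_append (h := by simp only [List.length_append]; omega),
        dif_pos (by omega : r + t < w.length),
        List.getElem_append (h := ht2), dif_pos (by omega : t < w.length)]
      have h4 := heqm t (by simp only [List.length_drop]; omega)
        (by simp only [List.length_take]; omega) htm
      simp only [List.getElem_drop, List.getElem_take] at h4
      exact h4
    · rw [getElem_rot_left (by simp only [List.length_append]; omega)]
      rw [List.getElem_append (h := by simp only [List.length_append]; omega),
        dif_pos (by omega : r + m < w.length),
        List.getElem_append (h := by simp only [List.length_append]; omega),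
        dif_pos (by omega : m < w.length)]
      exact hltm
  exact lt_asymm hrot hcon

theorem condC_replicate (a : α) (kk : ℕ) : CondC (List.replicate kk a) := by
  intro r h0 hr
  simp only [List.length_replicate] at hr ⊢
  rw [List.take_replicate, List.drop_replicate]
  apply le_of_eq
  congr 1
  simp

theorem period_of_border {w b : List α} (hpre : b <+: w) (hsuf : b <:+ w) :
    HasPeriod' w (w.length - b.length) := by
  intro m hm
  have hbl : b.length ≤ w.length := hpre.length_le
  have hmb : m < b.length := by omega
  have h1 : b[m]'hmb = w[m]'(by omega) := hpre.getElem hmb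
  have h2 : b[m]'hmb = w[w.length - b.length + m]'(by omega) := hsuf.getElem hmb
  have h3 : w[w.length - b.length + m]'(by omega) = w[m + (w.length - b.length)]'hm :=
    gei (by omega) _
  exact h1.symm.trans (h2.trans h3)

theorem take_eq_drop_of_period {w : List α} {p : ℕ} (hp0 : 0 < p) (hp : p ≤ w.length)
    (h : HasPeriod' w p) : w.take (w.length - p) = w.drop p := by
  apply List.ext_getElem (by simp only [List.length_take, List.length_drop]; omega)
  intro m h1 h2
  simp only [List.length_take] at h1
  simp only [List.getElem_take, List.getElem_drop]
  have h3 := h m (by omega)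
  have h4 : w[m + p]'(by omega) = w[p + m]'(by omega) := gei (by omega) _
  rw [h3, h4]

theorem lyndon_head_le {q : List α} (hq : IsLyndon' q) (t : ℕ) (ht : t < q.length) :
    q[0]'(by omega) ≤ q[t] := by
  rcases Nat.eq_zero_or_pos t with ht0 | htpos
  · subst ht0; exact le_refl _
  · have hrot := hq.2 t htpos ht
    obtain ⟨m, hmx, hmy, heqm, hltm⟩ := lx5 _ _ hrot (by rw [length_rot])
    rcases Nat.eq_zero_or_pos m with hm0 | hmpos
    · subst hm0
      rw [getElem_rot_left (by omega)] at hltm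
      have h4 : q[t + 0]'(by omega) = q[t]'ht := gei (by omega) _
      rw [h4] at hltm
      exact le_of_lt hltm
    · have h4 := heqm 0 (by omega) (by rw [length_rot]; omega) hmpos
      rw [getElem_rot_left (by omega)] at h4
      have h5 : q[t + 0]'(by omega) = q[t]'ht := gei (by omega) _
      rw [h5] at h4
      exact le_of_eq h4

theorem inP'_of_pf {w q : List α} (hq : IsLyndon' q) (hw : w ≠ [])
    (hpf : ∀ (m : ℕ) (h : m < w.length) (h2 : m % q.length < q.length),
      w[m] = q[m % q.length]'h2) : InP'0 w := by
  have hqne : q ≠ [] := hq.1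
  have hqpos : 0 < q.length := List.length_pos_iff.2 hqne
  by_cases hd : ∃ d, q[0]'hqpos < d
  · obtain ⟨d, hdgt⟩ := hd
    left
    refine ⟨hw, ?_⟩
    have hLly := lyndon_pow_snoc hq hdgt w.length
    have hwpre : w <+: listPow' q w.length :=
      prefix_listPow q w hqne (fun m h => hpf m h (Nat.mod_lt _ hqpos))
    have hwpre2 : w <+: listPow' q w.length ++ [d] :=
      hwpre.trans (List.prefix_append _ _)
    obtain ⟨u, hu⟩ := hwpre2
    exact ⟨u, hu ▸ hLly⟩
  · push_neg at hd
    have hall : ∀ (m : ℕ) (h : m < w.length), w[m] = q[0]'hqpos := by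
      intro m h
      rw [hpf m h (Nat.mod_lt _ hqpos)]
      exact le_antisymm (hd _) (lyndon_head_le hq _ (Nat.mod_lt _ hqpos))
    have hwrep : w = List.replicate w.length (q[0]'hqpos) := by
      apply List.ext_getElem (by simp)
      intro m h1 h2
      rw [List.getElem_replicate]
      exact hall m h1
    rcases lt_or_ge w.length 2 with hlen2 | hlen2
    · left
      refine ⟨hw, [], ?_⟩
      rw [List.append_nil]
      have h1 : w.length = 1 := by
        have := List.length_pos_iff.2 hw
        omega
      obtain ⟨a, rfl⟩ := List.length_eq_one_iff.1 h1
      exact lyndon_singleton a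
    · right
      exact ⟨q[0]'hqpos, w.length, hlen2, hd, hwrep⟩

theorem runWord_ne_nil (c : ℕ → α) (l : ℕ → ℕ) {k j : ℕ} (h : k < j) (hl : 1 ≤ l k) :
    runWord' c l k j ≠ [] := by
  rw [runWord_cons c l h]
  intro hcon
  have := congrArg List.length hcon
  simp only [List.length_append, List.length_replicate, List.length_nil] at this
  omega

theorem getElem_last_runWord (c : ℕ → α) (l : ℕ → ℕ) {k j : ℕ} (h : k < j)
    (hl : 1 ≤ l (j-1)) (hidx : (runWord' c l k j).length - 1 < (runWord' c l k j).length) :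
    (runWord' c l k j)[(runWord' c l k j).length - 1] = c (j-1) := by
  have hjeq : j = (j-1) + 1 := by omega
  have hsp := runWord_succ c l (by omega : k ≤ j - 1)
  rw [← hjeq] at hsp
  have hlen : (runWord' c l k j).length =
      (runWord' c l k (j-1)).length + l (j-1) := by
    rw [hsp]; simp
  rw [List.getElem_of_eq hsp hidx,
    List.getElem_append (h := by rw [← hsp]; exact hidx),
    dif_neg (by omega)]
  exact List.getElem_replicate _

end Helpers

set_option maxHeartbeats 1000000 in
/-- Under the run invariant, if `z = 0`, `c_j = c_i` and `l_j ≤ l_i`, then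
`c_k^{l_k} ⋯ c_{j-1}^{l_{j-1}} c_j^{l_j} ∈ P'` and its longest border has
run-length encoding of length `ℓ + 1`. -/
theorem rle_next_case3 [LinearOrder α] (c : ℕ → α) (l : ℕ → ℕ) (k j : ℕ) (hkj : k < j)
    (hlpos : ∀ t, k ≤ t → t ≤ j → 1 ≤ l t)
    (hcne : ∀ t, k ≤ t → t < j → c t ≠ c (t + 1))
    (hP' : InP' (runWord c l k j))
    (b : List α) (hb : IsBorder b (runWord c l k j))
    (hbmax : ∀ b' : List α, IsBorder b' (runWord c l k j) → b'.length ≤ b.length)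
    (ℓ i z s : ℕ)
    (hℓ : ℓ = if 1 < j - k then numRuns b else 0)
    (hi : i = k + ℓ)
    (hz : z = if 0 < ℓ ∧ l (j - 1) < l (i - 1) then 1 else 0)
    (hs : s = i - z)
    (hz0 : z = 0) (hceq : c j = c i) (hle : l j ≤ l i) :
    InP' (runWord c l k (j + 1)) ∧
      ∃ b' : List α, IsBorder b' (runWord c l k (j + 1)) ∧
        (∀ b'' : List α, IsBorder b'' (runWord c l k (j + 1)) → b''.length ≤ b'.length) ∧
        numRuns b' = ℓ + 1 := by
  classical
  -- reduce to primed notions (definitionally equal)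
  suffices hgoal : InP'0 (runWord' c l k (j + 1)) ∧
      ∃ b' : List α, IsBorder b' (runWord' c l k (j + 1)) ∧
        (∀ b'' : List α, IsBorder b'' (runWord' c l k (j + 1)) → b''.length ≤ b'.length) ∧
        numRuns' b' = ℓ + 1 by
    exact hgoal
  have hb : IsBorder b (runWord' c l k j) := hb
  have hbmax : ∀ b'' : List α, IsBorder b'' (runWord' c l k j) → b''.length ≤ b.length := hbmax
  have hP' : InP'0 (runWord' c l k j) := hP'
  have hℓ : ℓ = if 1 < j - k then numRuns' b else 0 := hℓ
  clear hs
  -- step 0 : j ≥ k + 2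
  have hj2 : k + 2 ≤ j := by
    by_contra hcon
    have hjk : j = k + 1 := by omega
    have hℓ0 : ℓ = 0 := by rw [hℓ, if_neg (by omega)]
    refine hcne k le_rfl (by omega) ?_
    rw [← hjk]
    rw [show i = k by omega] at hceq
    exact hceq.symm
  have hz' : ¬ (0 < ℓ ∧ l (j-1) < l (i-1)) := by
    intro hcon
    rw [hz0, if_pos hcon] at hz
    exact absurd hz (by omega)
  have hℓval : ℓ = numRuns' b := by rw [hℓ, if_pos (by omega)]
  have hWsplit : runWord' c l k (j+1) = runWord' c l k j ++ List.replicate (l j) (c j) :=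
    runWord_succ c l (le_of_lt hkj)
  have hW'split : runWord' c l k j =
      runWord' c l k (j-1) ++ List.replicate (l (j-1)) (c (j-1)) := by
    have h1 := runWord_succ c l (show k ≤ j-1 by omega)
    rw [show j-1+1 = j by omega] at h1
    exact h1
  have hW'ne : runWord' c l k j ≠ [] := runWord_ne_nil c l hkj (hlpos k le_rfl (by omega))
  -- step 2 : structure of b
  have hbpre : b <+: runWord' c l k (k + (j - k)) := by
    rw [show k + (j-k) = j by omega]
    exact hb.1
  obtain ⟨e, m, he, hbeq, hcond⟩ := prefix_runWord_struct c l (j-k) k b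
    (fun t h1 h2 => hlpos t h1 (by omega)) hbpre
  have hbrw : b = runWord' c l k i := by
    rcases hcond with hm0 | ⟨hed, hmpos, hmlt⟩
    · subst hm0
      simp only [List.replicate_zero, List.append_nil] at hbeq
      have hnr : numRuns' b = e := by
        rw [hbeq]
        exact nr_runWord c l e k (fun t h1 h2 => hlpos t h1 (by omega))
          (fun t h1 h2 => hcne t h1 (by omega))
      rw [hbeq, hi, hℓval, hnr]
    · exfalso
      have hnr : numRuns' b = e + 1 := by
        rw [hbeq]
        refine nr_runWord_rep c l e k (c (k+e)) m (fun t h1 h2 => hlpos t h1 (by omega))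
          (fun t h1 h2 => hcne t h1 (by omega)) ?_ hmpos
        rcases Nat.eq_zero_or_pos e with he0 | hepos
        · exact Or.inl he0
        · right
          intro hcon
          refine hcne (k+e-1) (by omega) (by omega) ?_
          rw [show k+e-1+1 = k+e by omega]
          exact hcon.symm
      have hℓe : ℓ = e + 1 := by rw [hℓval, hnr]
      have hie : i - 1 = k + e := by omega
      have hbsuf : b <:+ runWord' c l k (j-1) ++ List.replicate (l (j-1)) (c (j-1)) := by
        rw [← hW'split]
        exact hb.2.1
      rcases le_or_gt b.length (l (j-1)) with hble | hbgt
      · have hbrep := suffix_replicate_of_le hbsuf hble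
        rcases Nat.eq_zero_or_pos e with he0 | hepos
        · subst he0
          rw [Nat.add_zero, runWord_self, List.nil_append] at hbeq
          have hblen : b.length = m := by rw [hbeq, List.length_replicate]
          have hceq2 : c k = c (j-1) := by
            have h1 : b[0]'(by omega) = c k := by
              rw [List.getElem_of_eq hbeq (by omega)]
              exact List.getElem_replicate _
            have h2 : b[0]'(by omega) = c (j-1) := by
              rw [List.getElem_of_eq hbrep (by omega)]
              exact List.getElem_replicate _
            rw [h1] at h2
            exact h2
          rcases eq_or_lt_of_le (show m ≤ l (j-1) by omega) with hmeq | hmlt2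
          · apply hz'
            refine ⟨by omega, ?_⟩
            rw [show i - 1 = k by omega, ← hmeq]
            simpa using hmlt
          · have hext : IsBorder (List.replicate (m+1) (c k)) (runWord' c l k j) := by
              refine ⟨?_, ?_, ?_⟩
              · refine (replicate_prefix_replicate (show m+1 ≤ l k by simpa using hmlt)).trans ?_
                exact ⟨runWord' c l (k+1) j, (runWord_cons c l hkj).symm⟩
              · rw [hceq2]
                refine (replicate_suffix_replicate (show m+1 ≤ l (j-1) by omega)).trans ?_
                rw [hW'split]
                exact List.suffix_append _ _
              · have h1 : (runWord' c l k j).length =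
                    l k + (runWord' c l (k+1) j).length := by
                  rw [runWord_cons c l hkj]
                  simp
                have h2 : runWord' c l (k+1) j ≠ [] :=
                  runWord_ne_nil c l (by omega) (hlpos (k+1) (by omega) (by omega))
                have h3 : 0 < (runWord' c l (k+1) j).length := List.length_pos_iff.2 h2
                have h4 : m + 1 ≤ l k := by simpa using hmlt
                simp only [List.length_replicate]
                omega
            have h5 := hbmax _ hext
            simp only [List.length_replicate] at h5
            omega
        · have hbne : b ≠ [] := by
            intro hcon
            rw [hcon] at hbeq
            have := congrArg List.length hbeq
            simp only [List.length_nil, List.length_append, List.length_replicate] at this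
            omega
          have h1 : numRuns' b = 1 := by
            rw [hbrep]
            exact nr_replicate _ (List.length_pos_iff.2 hbne)
          omega
      · obtain ⟨b₀, hb₀eq, hb₀ne, hb₀suf⟩ := suffix_split_of_gt hbsuf hbgt
        have hglast : b₀.getLast? = some (c (j-2)) := by
          rw [getLast?_suffix hb₀suf hb₀ne]
          have h1 := getLast?_runWord c l (show k < j-1 by omega)
            (show 1 ≤ l (j-1-1) from hlpos (j-1-1) (by omega) (by omega))
          rw [show j-1-1 = j-2 by omega] at h1
          exact h1
        have hy1 : (runWord' c l k (k+e)).getLast? ≠ some (c (k+e)) := by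
          rcases Nat.eq_zero_or_pos e with he0 | hepos
          · subst he0
            rw [Nat.add_zero, runWord_self]
            simp
          · rw [getLast?_runWord c l (by omega) (hlpos (k+e-1) (by omega) (by omega))]
            intro hcon
            refine hcne (k+e-1) (by omega) (by omega) ?_
            rw [show k+e-1+1 = k+e by omega]
            exact Option.some_inj.1 hcon
        have hy2 : b₀.getLast? ≠ some (c (j-1)) := by
          rw [hglast]
          intro hcon
          refine hcne (j-2) (by omega) (by omega) ?_
          rw [show j-2+1 = j-1 by omega]
          exact Option.some_inj.1 hcon
        obtain ⟨hyeq, hceq3, hmeq⟩ := trailing_unique _ _ _ _ _ _ hmpos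
          (hlpos (j-1) (by omega) (by omega)) hy1 hy2 (hbeq.symm.trans hb₀eq)
        apply hz'
        refine ⟨by omega, ?_⟩
        rw [hie, ← hmeq]
        exact hmlt
  -- step 3
  have hblen : b.length = (runWord' c l k i).length := congrArg List.length hbrw
  have hilt : i < j := by
    by_contra hcon
    push_neg at hcon
    have h1 := runWord_append c l (le_of_lt hkj) hcon
    have h2 := congrArg List.length h1
    simp only [List.length_append] at h2
    have h3 := hb.2.2
    omega
  have hik : k ≤ i := by omega
  have hbl_li : (runWord' c l k i).length + l i ≤ (runWord' c l k j).length := by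
    have h1 := runWord_append c l (show k ≤ i+1 by omega) (show i+1 ≤ j by omega)
    have h2 := runWord_succ c l (show k ≤ i by omega)
    have h3 := congrArg List.length h1
    have h4 := congrArg List.length h2
    simp only [List.length_append, List.length_replicate] at h3 h4
    omega
  have hWlen : (runWord' c l k (j+1)).length = (runWord' c l k j).length + l j :=
    length_runWord_succ c l (le_of_lt hkj)
  have hlj1 : 1 ≤ l j := hlpos j (by omega) le_rfl
  constructor
  · -- InP'
    have hCW' : CondC (runWord' c l k j) := by
      rcases hP' with ⟨hne, u, hly⟩ | ⟨cc, kk, hkk2, hmaxc, hrepc⟩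
      · exact condC_of_lyndon_prefix hly
      · rw [hrepc]
        exact condC_replicate cc kk
    obtain ⟨q, hqly, hqpos, hqle, hPF, hmin⟩ :=
      periodic_struct (runWord' c l k j).length _ rfl hW'ne hCW'
    have hper1 := period_of_border hb.1 hb.2.1
    have hp_le : q.length ≤ (runWord' c l k j).length - b.length := by
      by_contra hcon
      have h3 := hb.2.2
      exact hmin _ (by omega) (by omega) hper1
    have hperq : HasPeriod' (runWord' c l k j) q.length := by
      intro m hm
      rw [hPF m (by omega) (Nat.mod_lt _ hqpos), hPF (m + q.length) hm (Nat.mod_lt _ hqpos)]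
      exact gei (by rw [Nat.add_mod_right]) _
    have hqleW : q.length ≤ (runWord' c l k j).length := by
      have := hb.2.2
      omega
    have hborder2 := take_eq_drop_of_period hqpos hqleW hperq
    have hp_ge : (runWord' c l k j).length - b.length ≤ q.length := by
      have hIB : IsBorder ((runWord' c l k j).take ((runWord' c l k j).length - q.length))
          (runWord' c l k j) := by
        refine ⟨List.take_prefix _ _, ?_, ?_⟩
        · rw [hborder2]
          exact List.drop_suffix _ _
        · rw [List.length_take]
          have h0 : 0 < (runWord' c l k j).length := List.length_pos_iff.2 hW'ne
          omega
      have h5 := hbmax _ hIB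
      rw [List.length_take] at h5
      omega
    have hpval : q.length = (runWord' c l k j).length - b.length := le_antisymm hp_le hp_ge
    have hPFW : ∀ (M : ℕ) (h : M < (runWord' c l k (j+1)).length)
        (h2 : M % q.length < q.length), (runWord' c l k (j+1))[M] = q[M % q.length]'h2 := by
      intro M hM h2
      rcases lt_or_ge M (runWord' c l k j).length with hMlt | hMge
      · rw [List.getElem_of_eq hWsplit hM,
          List.getElem_append (h := by rw [← hWsplit]; exact hM), dif_pos hMlt]
        exact hPF M hMlt h2
      · have hMc : (runWord' c l k (j+1))[M]'hM = c j := by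
          rw [List.getElem_of_eq hWsplit hM,
            List.getElem_append (h := by rw [← hWsplit]; exact hM), dif_neg (not_lt.2 hMge)]
          exact List.getElem_replicate _
        have hb2 := hb.2.2
        have hMp_lt : M - q.length < (runWord' c l k j).length := by omega
        have hMp_ge : b.length ≤ M - q.length := by omega
        have h3 := hPF (M - q.length) hMp_lt (Nat.mod_lt _ hqpos)
        have h4 : q[(M - q.length) % q.length]'(Nat.mod_lt _ hqpos) = q[M % q.length]'h2 := by
          apply gei
          conv_rhs => rw [show M = (M - q.length) + q.length by omega]
          rw [Nat.add_mod_right]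
        have h5 : (runWord' c l k j)[M - q.length]'hMp_lt = c i := by
          have hsplit2 : runWord' c l k j = runWord' c l k i ++ runWord' c l i j :=
            (runWord_append c l hik (le_of_lt hilt)).symm
          rw [List.getElem_of_eq hsplit2 hMp_lt,
            List.getElem_append (h := by rw [← hsplit2]; exact hMp_lt),
            dif_neg (by omega)]
          have hsplit3 : runWord' c l i j =
              List.replicate (l i) (c i) ++ runWord' c l (i+1) j := runWord_cons c l hilt
          have hidx : M - q.length - (runWord' c l k i).length < l i := by omega
          rw [List.getElem_of_eq hsplit3 (by
              have := congrArg List.length hsplit2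
              simp only [List.length_append] at this
              omega),
            List.getElem_append (h := by
              rw [← hsplit3]
              have h9 := congrArg List.length hsplit2
              simp only [List.length_append] at h9
              omega),
            dif_pos (by simp only [List.length_replicate]; exact hidx)]
          exact List.getElem_replicate _
        rw [hMc, ← h4, ← h3, h5]
        exact hceq
    have hWne : runWord' c l k (j+1) ≠ [] :=
      runWord_ne_nil c l (by omega) (hlpos k le_rfl (by omega))
    exact inP'_of_pf hqly hWne hPFW
  · -- the border b'
    refine ⟨runWord' c l k i ++ List.replicate (l j) (c j), ⟨?_, ?_, ?_⟩, ?_, ?_⟩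
    · -- prefix
      have h1 : runWord' c l k (j+1) = runWord' c l k i ++ runWord' c l i (j+1) :=
        (runWord_append c l hik (by omega)).symm
      have h2 : runWord' c l i (j+1) =
          List.replicate (l i) (c i) ++ runWord' c l (i+1) (j+1) := runWord_cons c l (by omega)
      have h3 : List.replicate (l j) (c j) <+: runWord' c l i (j+1) := by
        rw [h2, hceq]
        exact (replicate_prefix_replicate hle).trans (List.prefix_append _ _)
      obtain ⟨t, ht⟩ := h3
      rw [h1]
      exact ⟨t, by rw [List.append_assoc, ht]⟩
    · -- suffix
      rw [hWsplit]
      obtain ⟨u, hu⟩ := hb.2.1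
      rw [hbrw] at hu
      exact ⟨u, by rw [← List.append_assoc, hu]⟩
    · -- length
      have h3 := hb.2.2
      simp only [List.length_append, List.length_replicate]
      omega
    · -- maximality
      intro b'' hb''
      by_contra hcon
      push_neg at hcon
      simp only [List.length_append, List.length_replicate] at hcon
      have hb''lt := hb''.2.2
      have hltW' : b''.length < (runWord' c l k j).length := by
        by_contra hge
        push_neg at hge
        have h0 : 0 < (runWord' c l k j).length := List.length_pos_iff.2 hW'ne
        have hidx1 : (runWord' c l k j).length - 1 < b''.length := by omega
        have e1 : b''[(runWord' c l k j).length - 1]'hidx1 =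
            (runWord' c l k (j+1))[(runWord' c l k j).length - 1]'(by omega) :=
          hb''.1.getElem hidx1
        have e2 : (runWord' c l k (j+1))[(runWord' c l k j).length - 1]'(by omega) = c (j-1) := by
          rw [List.getElem_of_eq hWsplit (by omega),
            List.getElem_append (h := by rw [← hWsplit]; omega), dif_pos (by omega)]
          exact getElem_last_runWord c l hkj (hlpos (j-1) (by omega) (by omega)) (by omega)
        have e3 : b''[(runWord' c l k j).length - 1]'hidx1 = c j := by
          have h6 := hb''.2.1.getElem hidx1
          rw [h6]
          rw [List.getElem_of_eq hWsplit (by omega),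
            List.getElem_append (h := by rw [← hWsplit]; omega),
            dif_neg (by omega)]
          exact List.getElem_replicate _
        refine hcne (j-1) (by omega) (by omega) ?_
        rw [show j-1+1 = j by omega]
        rw [e1, e2] at e3
        exact e3
      -- construct the longer border u of W'
      have hd_le : (runWord' c l k (j+1)).length - b''.length ≤ (runWord' c l k j).length := by
        omega
      have h6 := List.suffix_iff_eq_drop.1 hb''.2.1
      rw [hWsplit, List.drop_append] at h6
      rw [show (runWord' c l k j ++ List.replicate (l j) (c j)).length - b''.length -
          (runWord' c l k j).length = 0 by simp only [List.length_append, List.length_replicate]; omega,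
        List.drop_zero] at h6
      set d0 := (runWord' c l k j ++ List.replicate (l j) (c j)).length - b''.length with hd0
      have hd0len : ((runWord' c l k j).drop d0).length = b''.length - l j := by
        simp only [List.length_drop, hd0, List.length_append, List.length_replicate]
        omega
      have hu_pre : (runWord' c l k j).drop d0 <+: runWord' c l k j := by
        have h7 : (runWord' c l k j).drop d0 <+: b'' := by
          rw [h6]
          exact List.prefix_append _ _
        have h8 : (runWord' c l k j).drop d0 <+: runWord' c l k (j+1) := h7.trans hb''.1
        rw [hWsplit] at h8
        exact prefix_of_prefix_append h8 (by rw [hd0len]; omega)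
      have hub : IsBorder ((runWord' c l k j).drop d0) (runWord' c l k j) :=
        ⟨hu_pre, List.drop_suffix _ _, by rw [hd0len]; omega⟩
      have h9 := hbmax _ hub
      rw [hd0len] at h9
      omega
    · -- numRuns
      have h1 : runWord' c l k i = runWord' c l k (k + (i - k)) := by rw [show k + (i-k) = i by omega]
      rw [h1]
      rw [nr_runWord_rep c l (i-k) k (c j) (l j)
        (fun t ht1 ht2 => hlpos t ht1 (by omega))
        (fun t ht1 ht2 => hcne t ht1 (by omega)) ?_ hlj1]
      · omega
      · rcases Nat.eq_zero_or_pos (i - k) with h0 | hpos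
        · exact Or.inl h0
        · right
          rw [show k + (i-k) - 1 = i - 1 by omega]
          rw [hceq]
          intro hcon
          refine hcne (i-1) (by omega) (by omega) ?_
          rw [show i-1+1 = i by omega]
          exact hcon.symm
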